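/- Let G be a simple graph. If an edge set D ⊆ E(G) has finite even intersection with every ⊆-minimal nonempty finite cut of G, then D has finite even intersection with every finite cut of G. -/

import Mathlib

open Set

variable {V : Type*}

/-- The edge set of a cycle of `G` (a finite circuit). -/
def IsCircuit (G : SimpleGraph V) (C : Set (Sym2 V)) : Prop :=
  ∃ (v : V) (w : G.Walk v v), w.IsCycle ∧ C = {e | e ∈ w.edges}

/-- The cut `E(A, V∖A)`: edges of `G` with exactly one endvertex in `A`. -/
def cutEdges (G : SimpleGraph V) (A : Set V) : Set (Sym2 V) :=
  {e | ∃ x y, G.Adj x y ∧ x ∈ A ∧ y ∉ A ∧ e = s(x, y)}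

/-- `C` is a cut of `G`. -/
def IsCut (G : SimpleGraph V) (C : Set (Sym2 V)) : Prop :=
  ∃ A : Set V, C = cutEdges G A

/-- A bond is a ⊆-minimal nonempty cut. -/
def IsBond (G : SimpleGraph V) (B : Set (Sym2 V)) : Prop :=
  IsCut G B ∧ B ≠ ∅ ∧ ∀ C, IsCut G C → C ≠ ∅ → C ⊆ B → C = B

/-- Two edge sets are orthogonal: their intersection is finite and of even cardinality. -/
def EvenInter (D F : Set (Sym2 V)) : Prop :=
  (D ∩ F).Finite ∧ Even (D ∩ F).ncard

/-- A ray in `G`. -/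
def IsRay (G : SimpleGraph V) (R : ℕ → V) : Prop :=
  Function.Injective R ∧ ∀ n, G.Adj (R n) (R (n + 1))

/-- A double ray in `G`. -/
def IsDoubleRay (G : SimpleGraph V) (R : ℤ → V) : Prop :=
  Function.Injective R ∧ ∀ n, G.Adj (R n) (R (n + 1))

/-- The edge set of a double ray. -/
def doubleRayEdges (R : ℤ → V) : Set (Sym2 V) :=
  {e | ∃ n : ℤ, e = s(R n, R (n + 1))}

/-- `D` is the edge set of some double ray of `G`. -/
def IsDoubleRayEdgeSet (G : SimpleGraph V) (D : Set (Sym2 V)) : Prop :=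
  ∃ R : ℤ → V, IsDoubleRay G R ∧ D = doubleRayEdges R

/-- `a` and `b` are joined by a walk of `G` all of whose vertices avoid `S`,
i.e. they lie in a common component of `G − S`. -/
def ConnAvoiding (G : SimpleGraph V) (S : Set V) (a b : V) : Prop :=
  ∃ w : G.Walk a b, ∀ x ∈ w.support, x ∉ S

/-- `v` lies in `C(S,R)`, the component of `G − S` containing a tail of the ray `R`. -/
def InC (G : SimpleGraph V) (S : Set V) (R : ℕ → V) (v : V) : Prop :=
  ∃ m : ℕ, (∀ n, R (m + n) ∉ S) ∧ ConnAvoiding G S v (R m)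

/-- The rays `R` and `R'` are equivalent (lie in the same end): for every finite `S`
some component of `G − S` contains a tail of both. -/
def RayEquiv (G : SimpleGraph V) (R R' : ℕ → V) : Prop :=
  ∀ S : Set V, S.Finite → ∃ m m', (∀ n, R (m + n) ∉ S) ∧ (∀ n, R' (m' + n) ∉ S) ∧
    ConnAvoiding G S (R m) (R' m')

/-- The sequence `v` of vertices converges to the end of the ray `R`: for every finite `S`
all but finitely many `v i` lie in `C(S,R)`. -/
def ConvergesTo (G : SimpleGraph V) (R : ℕ → V) (v : ℕ → V) : Prop :=
  ∀ S : Set V, S.Finite → {i : ℕ | ¬ InC G S R (v i)}.Finite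

/-- `F` is the vertex set of a `k`-fan from `u` to `Y`: a union of `k` paths starting
at `u`, pairwise sharing no vertex other than `u`, ending in `k` distinct vertices of `Y`. -/
def IsFan (G : SimpleGraph V) (k : ℕ) (u : V) (Y : Set V) (F : Set V) : Prop :=
  ∃ (ends : Fin k → V) (P : ∀ i, G.Walk u (ends i)),
    (∀ i, (P i).IsPath) ∧ (∀ i, ends i ∈ Y) ∧ Function.Injective ends ∧
    (∀ i j, i ≠ j → ∀ x, x ∈ (P i).support → x ∈ (P j).support → x = u) ∧
    F = ⋃ i, {x | x ∈ (P i).support}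

/-- `L` is the vertex set of a `k`-linkage from `x` to `y`: a union of `k` paths from
`x` to `y` pairwise sharing no vertices other than `x` and `y`. -/
def IsLinkage (G : SimpleGraph V) (k : ℕ) (x y : V) (L : Set V) : Prop :=
  ∃ P : Fin k → G.Walk x y,
    (∀ i, (P i).IsPath) ∧ Function.Injective P ∧
    (∀ i j, i ≠ j → ∀ z, z ∈ (P i).support → z ∈ (P j).support → z = x ∨ z = y) ∧
    L = ⋃ i, {z | z ∈ (P i).support}

/-- The end represented by the ray `R` is `k`-padded: for every equivalent ray `R'`
there is a finite `S` such that every vertex of `C(S,R')` admits a `k`-fan to the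
image of `R'` in `G`. -/
def IsPaddedEnd (G : SimpleGraph V) (k : ℕ) (R : ℕ → V) : Prop :=
  ∀ R' : ℕ → V, IsRay G R' → RayEquiv G R R' →
    ∃ S : Set V, S.Finite ∧ ∀ v, InC G S R' v → ∃ F, IsFan G k v (Set.range R') F

/-- `G` is `k`-padded at infinity: every end of `G` is `k`-padded. -/
def PaddedAtInfinity (G : SimpleGraph V) (k : ℕ) : Prop :=
  ∀ R : ℕ → V, IsRay G R → IsPaddedEnd G k R

/-- `G` is `k`-connected: it has more than `k` vertices and deleting fewer than `k`
vertices leaves it connected. -/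
def KConnected (G : SimpleGraph V) (k : ℕ) : Prop :=
  (k : ℕ∞) < (Set.univ : Set V).encard ∧
  ∀ S : Set V, S.Finite → S.ncard < k → (G.induce (Sᶜ : Set V)).Connected

/-- The algebraic cycle space: edge sets meeting every vertex in an even number of edges. -/
def CAlg (G : SimpleGraph V) : Set (Set (Sym2 V)) :=
  {D | D ⊆ G.edgeSet ∧ ∀ v : V, {e ∈ D | v ∈ e}.Finite ∧ Even {e ∈ D | v ∈ e}.ncard}

/-- The finite-cycle space: symmetric-difference sums of finitely many finite circuits. -/
def CFin (G : SimpleGraph V) : Set (Set (Sym2 V)) :=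
  {D | ∃ l : List (Set (Sym2 V)), (∀ C ∈ l, IsCircuit G C) ∧ D = l.foldr symmDiff ∅}

lemma mem_cutEdges_iff {G : SimpleGraph V} {S : Set V} {a b : V} :
    s(a, b) ∈ cutEdges G S ↔ G.Adj a b ∧ Xor' (a ∈ S) (b ∈ S) := by
  constructor
  · rintro ⟨x, y, hxy, hx, hy, he⟩
    rw [Sym2.eq_iff] at he
    rcases he with ⟨rfl, rfl⟩ | ⟨rfl, rfl⟩
    · exact ⟨hxy, Or.inl ⟨hx, hy⟩⟩
    · exact ⟨hxy.symm, Or.inr ⟨hx, hy⟩⟩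
  · rintro ⟨hab, h | h⟩
    · exact ⟨a, b, hab, h.1, h.2, rfl⟩
    · exact ⟨b, a, hab.symm, h.1, h.2, Sym2.eq_swap.symm⟩

lemma cutEdges_symmDiff (G : SimpleGraph V) (A B : Set V) :
    symmDiff (cutEdges G A) (cutEdges G B) = cutEdges G (symmDiff A B) := by
  ext e
  induction e using Sym2.ind with
  | _ a b =>
    simp only [Set.mem_symmDiff, mem_cutEdges_iff, Xor']
    by_cases hab : G.Adj a b <;> by_cases ha : a ∈ A <;> by_cases hb : b ∈ A <;>
      by_cases ha' : a ∈ B <;> by_cases hb' : b ∈ B <;> simp_all <;> tauto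

/-- If an edge set `D` has finite even intersection with every ⊆-minimal nonempty
finite cut of `G`, then it has finite even intersection with every finite cut of `G`. -/
theorem stmt_3 (G : SimpleGraph V) (D : Set (Sym2 V)) (hD : D ⊆ G.edgeSet)
    (h : ∀ M, IsCut G M → M.Finite → M ≠ ∅ →
      (∀ N, IsCut G N → N.Finite → N ≠ ∅ → N ⊆ M → N = M) → EvenInter D M) :
    ∀ F, IsCut G F → F.Finite → EvenInter D F := by
  intro F hF hFfin
  generalize hn : F.ncard = n
  induction n using Nat.strong_induction_on generalizing F with
  | _ n IH =>
  by_cases hF0 : F = ∅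
  · subst hF0
    exact ⟨by simp, by simp⟩
  · -- choose M ⊆ F a nonempty cut of minimal cardinality
    set T : Set ℕ := {k | ∃ M, (IsCut G M ∧ M ≠ ∅ ∧ M ⊆ F) ∧ M.ncard = k} with hT
    have hTne : T.Nonempty := ⟨F.ncard, F, ⟨hF, hF0, subset_rfl⟩, rfl⟩
    obtain ⟨M, ⟨hMcut, hMne, hMF⟩, hMcard⟩ := Nat.sInf_mem hTne
    have hMfin : M.Finite := hFfin.subset hMF
    -- M is globally ⊆-minimal
    have hMmin : ∀ N, IsCut G N → N.Finite → N ≠ ∅ → N ⊆ M → N = M := by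
      intro N hN hNfin hNne hNM
      have : sInf T ≤ N.ncard := Nat.sInf_le ⟨N, ⟨hN, hNne, hNM.trans hMF⟩, rfl⟩
      rw [← hMcard] at this
      exact Set.eq_of_subset_of_ncard_le hNM this hMfin
    have hM := h M hMcut hMfin hMne hMmin
    -- F \ M is again a cut
    obtain ⟨A, hA⟩ := hF
    obtain ⟨B, hB⟩ := hMcut
    have hdiff : F \ M = cutEdges G (symmDiff A B) := by
      rw [← cutEdges_symmDiff, ← hA, ← hB, symmDiff_of_ge hMF]
    have hMpos : 0 < M.ncard := (Set.ncard_pos hMfin).mpr (Set.nonempty_iff_ne_empty.mpr hMne)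
    have hlt : (F \ M).ncard < n := by
      rw [Set.ncard_diff hMF hMfin, ← hn]
      have hMle : M.ncard ≤ F.ncard := Set.ncard_le_ncard hMF hFfin
      omega
    have hFM := IH _ hlt (F \ M) ⟨_, hdiff⟩ hFfin.diff rfl
    -- combine
    have hsplit : D ∩ F = (D ∩ M) ∪ (D ∩ (F \ M)) := by
      rw [← Set.inter_union_distrib_left, Set.union_diff_cancel hMF]
    have hdisj : Disjoint (D ∩ M) (D ∩ (F \ M)) := by
      apply Set.disjoint_of_subset inter_subset_right inter_subset_right
      exact Set.disjoint_sdiff_right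
    constructor
    · rw [hsplit]; exact hM.1.union hFM.1
    · rw [hsplit, Set.ncard_union_eq hdisj hM.1 hFM.1]
      exact hM.2.add hFM.2
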